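/- Let A be an n×n symmetric positive definite matrix with condition number κ_A and η > 0. For every x in the unit simplex Ω, the spectral radius of ηI − ∇²φ_A(x) is at most η + 2n κ_A, where φ_A(x) = −ln(xᵀAx). Consequently x ↦ (η/2)‖x‖² − ln(xᵀAx) is (η + 2nκ_A)-smooth on Ω. -/

import Mathlib

open Matrix

lemma psd_smul_one_sub {m : ℕ} (A : Matrix (Fin m) (Fin m) ℝ) (hA : A.IsHermitian) (c : ℝ)
    (h : ∀ i, hA.eigenvalues i ≤ c) : (c • (1 : Matrix (Fin m) (Fin m) ℝ) - A).PosSemidef := by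
  have key : c • (1 : Matrix (Fin m) (Fin m) ℝ) - A =
      (hA.eigenvectorUnitary : Matrix (Fin m) (Fin m) ℝ) *
        diagonal (fun i => c - hA.eigenvalues i) *
        (star (hA.eigenvectorUnitary : Matrix (Fin m) (Fin m) ℝ)) := by
    conv_lhs => rw [hA.spectral_theorem]
    rw [Unitary.conjStarAlgAut_apply]
    have h1 : c • (1 : Matrix (Fin m) (Fin m) ℝ) =
        (hA.eigenvectorUnitary : Matrix (Fin m) (Fin m) ℝ) * (c • 1) *
          (star (hA.eigenvectorUnitary : Matrix (Fin m) (Fin m) ℝ)) := by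
      rw [Matrix.mul_smul, mul_one, Matrix.smul_mul,
        (Matrix.mem_unitaryGroup_iff).mp hA.eigenvectorUnitary.2]
    rw [h1, ← Matrix.sub_mul, ← Matrix.mul_sub]
    congr 2
    ext i j
    by_cases hij : i = j <;>
      simp [Matrix.one_apply, Matrix.diagonal_apply, hij]
  rw [key]
  exact (posSemidef_diagonal_iff.mpr fun i => sub_nonneg.2 (h i)).mul_mul_conjTranspose_same _

lemma psd_sub_smul_one {m : ℕ} (A : Matrix (Fin m) (Fin m) ℝ) (hA : A.IsHermitian) (c : ℝ)
    (h : ∀ i, c ≤ hA.eigenvalues i) : (A - c • (1 : Matrix (Fin m) (Fin m) ℝ)).PosSemidef := by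
  have key : A - c • (1 : Matrix (Fin m) (Fin m) ℝ) =
      (hA.eigenvectorUnitary : Matrix (Fin m) (Fin m) ℝ) *
        diagonal (fun i => hA.eigenvalues i - c) *
        (star (hA.eigenvectorUnitary : Matrix (Fin m) (Fin m) ℝ)) := by
    conv_lhs => rw [hA.spectral_theorem]
    rw [Unitary.conjStarAlgAut_apply]
    have h1 : c • (1 : Matrix (Fin m) (Fin m) ℝ) =
        (hA.eigenvectorUnitary : Matrix (Fin m) (Fin m) ℝ) * (c • 1) *
          (star (hA.eigenvectorUnitary : Matrix (Fin m) (Fin m) ℝ)) := by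
      rw [Matrix.mul_smul, mul_one, Matrix.smul_mul,
        (Matrix.mem_unitaryGroup_iff).mp hA.eigenvectorUnitary.2]
    rw [h1, ← Matrix.sub_mul, ← Matrix.mul_sub]
    congr 2
    ext i j
    by_cases hij : i = j <;>
      simp [Matrix.one_apply, Matrix.diagonal_apply, hij]
  rw [key]
  exact (posSemidef_diagonal_iff.mpr fun i => sub_nonneg.2 (h i)).mul_mul_conjTranspose_same _

lemma psd_dot {m : ℕ} {M : Matrix (Fin m) (Fin m) ℝ} (hM : M.PosSemidef) (v : Fin m → ℝ) :
    0 ≤ v ⬝ᵥ M *ᵥ v := by simpa using hM.dotProduct_mulVec_nonneg v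

/-- The Hessian of `φ_A(x) = -ln(xᵀAx)`. -/
noncomputable def hessPhi {n : ℕ} (A : Matrix (Fin n) (Fin n) ℝ) (x : Fin n → ℝ) :
    Matrix (Fin n) (Fin n) ℝ :=
  (4 / (x ⬝ᵥ A.mulVec x) ^ 2) • Matrix.vecMulVec (A.mulVec x) (A.mulVec x)
    - (2 / (x ⬝ᵥ A.mulVec x)) • A

set_option maxHeartbeats 1000000 in
theorem g_smoothness_bound (n : ℕ) (A : Matrix (Fin n) (Fin n) ℝ)
    (hA : A.PosDef) (l1 ln κ η : ℝ) (hη : 0 < η)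
    (hmin : ∀ i, l1 ≤ hA.isHermitian.eigenvalues i)
    (hminmem : ∃ i, hA.isHermitian.eigenvalues i = l1)
    (hmax : ∀ i, hA.isHermitian.eigenvalues i ≤ ln)
    (hmaxmem : ∃ i, hA.isHermitian.eigenvalues i = ln)
    (hκ : κ = ln / l1) :
    ∀ x ∈ stdSimplex ℝ (Fin n),
      ∀ (hH : (η • (1 : Matrix (Fin n) (Fin n) ℝ) - hessPhi A x).IsHermitian),
        ∀ i, |hH.eigenvalues i| ≤ η + 2 * n * κ := by
  intro x hx hH i
  have hn : 0 < n := i.pos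
  -- positivity of the extreme eigenvalues
  have hl1 : 0 < l1 := by
    obtain ⟨j, hj⟩ := hminmem
    exact hj ▸ hA.eigenvalues_pos j
  have hln : 0 < ln := by
    obtain ⟨j, hj⟩ := hmaxmem
    exact hj ▸ hA.eigenvalues_pos j
  -- basic facts about x
  have hx0 : x ≠ 0 := by
    intro h
    have := hx.2
    simp [h] at this
  have hs_pos : 0 < x ⬝ᵥ A *ᵥ x := by simpa using hA.dotProduct_mulVec_pos hx0
  have hAt : Aᵀ = A := by
    have := hA.isHermitian.eq
    simpa [Matrix.conjTranspose_eq_transpose_of_trivial] using this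
  have hsymm : ∀ v : Fin n → ℝ, x ⬝ᵥ A *ᵥ v = v ⬝ᵥ A *ᵥ x := by
    intro v
    rw [Matrix.dotProduct_mulVec, ← Matrix.mulVec_transpose, hAt, dotProduct_comm]
  have hxx : (1:ℝ) ≤ n * (x ⬝ᵥ x) := by
    have hsum : ∑ j, x j = 1 := hx.2
    have h := sq_sum_le_card_mul_sum_sq (s := Finset.univ) (f := x)
    rw [hsum] at h
    simpa [dotProduct, sq] using h
  -- the eigenvector
  set v : Fin n → ℝ := ⇑(hH.eigenvectorBasis i) with hvdef
  have hv : v ⬝ᵥ v = 1 := by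
    have h1 := hH.eigenvectorBasis.orthonormal.1 i
    have h2 : (inner ℝ (hH.eigenvectorBasis i) (hH.eigenvectorBasis i) : ℝ) = 1 := by
      rw [real_inner_self_eq_norm_sq, h1]; norm_num
    simp only [PiLp.inner_apply, RCLike.inner_apply, conj_trivial] at h2
    rw [hvdef]
    simpa [dotProduct] using h2
  have heq := hH.mulVec_eigenvectorBasis i
  have hlam : hH.eigenvalues i = v ⬝ᵥ ((η • (1 : Matrix (Fin n) (Fin n) ℝ) - hessPhi A x) *ᵥ v) := by
    rw [← hvdef] at heq
    rw [heq]
    simp [dotProduct_smul, hv]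
  -- expansion of the quadratic form
  set s := x ⬝ᵥ A *ᵥ x with hsdef
  set q := v ⬝ᵥ A *ᵥ x with hq
  set p := v ⬝ᵥ A *ᵥ v with hp
  have hvmv : ∀ w : Fin n → ℝ, Matrix.vecMulVec w w *ᵥ v = (w ⬝ᵥ v) • w := by
    intro w
    ext j
    simp only [Matrix.mulVec, dotProduct, Matrix.vecMulVec_apply, Pi.smul_apply,
      smul_eq_mul]
    rw [Finset.sum_mul]
    exact Finset.sum_congr rfl fun k _ => by ring
  have hexp : v ⬝ᵥ ((η • (1 : Matrix (Fin n) (Fin n) ℝ) - hessPhi A x) *ᵥ v)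
      = η - (4 / s ^ 2 * (q * q) - 2 / s * p) := by
    simp [hessPhi, Matrix.sub_mulVec, Matrix.smul_mulVec, hvmv (A *ᵥ x),
      dotProduct_sub, dotProduct_smul, smul_eq_mul, hv,
      dotProduct_comm (A *ᵥ x) v, ← hq, ← hp, ← hsdef]
  -- Cauchy–Schwarz for the A-inner product
  have hquad : ∀ t : ℝ, 0 ≤ p * (t * t) + (2 * q) * t + s := by
    intro t
    have h0 := psd_dot hA.posSemidef (x + t • v)
    have hexpand : (x + t • v) ⬝ᵥ A *ᵥ (x + t • v) = p * (t * t) + (2 * q) * t + s := by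
      simp [Matrix.mulVec_add, Matrix.mulVec_smul, dotProduct_add,
        add_dotProduct, dotProduct_smul, smul_dotProduct,
        smul_eq_mul, hsymm v, ← hq, ← hp, ← hsdef]
      ring
    linarith [hexpand ▸ h0]
  have hq2 : q ^ 2 ≤ p * s := by
    have hd := discrim_le_zero hquad
    rw [discrim] at hd
    nlinarith
  -- eigenvalue bounds on quadratic forms
  have hp_le : p ≤ ln := by
    have h0 := psd_dot (psd_smul_one_sub A hA.isHermitian ln hmax) v
    simp [Matrix.sub_mulVec, Matrix.smul_mulVec, dotProduct_sub,
      dotProduct_smul, smul_eq_mul, hv, ← hp] at h0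
    linarith
  have hp_ge : 0 ≤ p := psd_dot hA.posSemidef v
  have hs_ge : l1 * (x ⬝ᵥ x) ≤ s := by
    have h0 := psd_dot (psd_sub_smul_one A hA.isHermitian l1 hmin) x
    simp [Matrix.sub_mulVec, Matrix.smul_mulVec, dotProduct_sub,
      dotProduct_smul, smul_eq_mul, ← hsdef] at h0
    linarith
  -- combine everything
  have hsn : l1 / n ≤ s := by
    have hxx' : (1:ℝ) / n ≤ x ⬝ᵥ x := by
      rw [div_le_iff₀ (by positivity)]
      linarith [hxx]
    calc l1 / n = l1 * (1 / n) := by ring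
      _ ≤ l1 * (x ⬝ᵥ x) := by nlinarith
      _ ≤ s := hs_ge
  have hsn_pos : (0:ℝ) < l1 / n := by positivity
  have hu : 1 / s ≤ n / l1 := by
    rw [div_le_div_iff₀ hs_pos hl1]
    calc 1 * l1 = (l1 / n) * n := by field_simp
      _ ≤ s * n := by
        have : (0:ℝ) < (n:ℝ) := by positivity
        nlinarith
      _ = ↑n * s := mul_comm _ _
  have hpu : p * (1 / s) ≤ n * κ := by
    rw [hκ]
    calc p * (1 / s) ≤ ln * (n / l1) := by
          apply mul_le_mul hp_le hu (by positivity) (le_of_lt hln)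
      _ = n * (ln / l1) := by ring
  -- bound |t| where t = 4/s²·q² − 2/s·p
  set t := 4 / s ^ 2 * (q * q) - 2 / s * p with htdef
  have hsinv : (0:ℝ) < 1 / s := by positivity
  have hss : s * (1 / s) = 1 := by field_simp
  have ht_le : t ≤ 2 * (p * (1 / s)) := by
    have h1 : 4 / s ^ 2 * (q * q) ≤ 4 * (p * (1 / s)) := by
      have e1 : 4 / s ^ 2 * (q * q) = 4 * q ^ 2 * ((1/s) * (1/s)) := by
        field_simp
      have e2 : 4 * q ^ 2 * ((1/s) * (1/s)) ≤ 4 * (p * s) * ((1/s) * (1/s)) :=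
        mul_le_mul_of_nonneg_right (by linarith) (by positivity)
      calc 4 / s ^ 2 * (q * q) = 4 * q ^ 2 * (1/s * (1/s)) := e1
        _ ≤ 4 * (p * s) * (1/s * (1/s)) := e2
        _ = 4 * (p * (1/s)) * (s * (1/s)) := by ring
        _ = 4 * (p * (1/s)) := by rw [hss, mul_one]
    have h2 : 2 / s * p = 2 * (p * (1 / s)) := by ring
    rw [htdef]
    linarith
  have ht_ge : -(2 * (p * (1 / s))) ≤ t := by
    have h1 : 0 ≤ 4 / s ^ 2 * (q * q) :=
      mul_nonneg (div_nonneg (by norm_num) (sq_nonneg s)) (mul_self_nonneg q)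
    have h2 : 2 / s * p = 2 * (p * (1 / s)) := by ring
    rw [htdef]
    linarith
  have hlamval : hH.eigenvalues i = η - t := by rw [hlam, hexp]
  clear_value v s q p t
  have hfin : 2 * (p * (1 / s)) ≤ 2 * (↑n * κ) := by linarith
  rw [hlamval, abs_le]
  constructor <;> nlinarith [hfin, ht_le, ht_ge, hη]
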